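/- Let Ω be a set, 𝔖 a coat of Ω, p' : 𝔖' → [0,1] a quasi-probability measure of 𝔖, and p⋇ the associated exterior quasi-measure. Then every set in the algebra 𝒜(𝔖) generated by 𝔖 is Carathéodory-measurable for p⋇: for every E ∈ 𝒜(𝔖) and every subset A ⊆ Ω, p⋇(A) = p⋇(A ∩ E) + p⋇(A ∩ (Ω \ E)). -/

import Mathlib

open Set

/-- A family of subsets of `Ω` is a *coat* of `Ω` if it contains `∅` and `Ω`. -/
def IsCoat {Ω : Type*} (S : Set (Set Ω)) : Prop := ∅ ∈ S ∧ Set.univ ∈ S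

/-- The *refinement* of `S`: all sets of the form `X ∩ Y` or `X ∩ Yᶜ` with `X, Y ∈ S`. -/
def refinement {Ω : Type*} (S : Set (Set Ω)) : Set (Set Ω) :=
  {T | ∃ X ∈ S, ∃ Y ∈ S, T = X ∩ Y ∨ T = X ∩ Yᶜ}

/-- `p` is a *quasi-probability measure* of the coat `S` (witnesses in `S`). -/
def IsQuasiMeasure {Ω : Type*} (S : Set (Set Ω)) (p : Set Ω → ℝ) : Prop :=
  (∀ T ∈ refinement S, p T ∈ Set.Icc (0 : ℝ) 1) ∧
  p ∅ = 0 ∧ p Set.univ = 1 ∧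
  (∀ X ∈ S, ∀ Y ∈ S, p X = p (X ∩ Y) + p (X ∩ Yᶜ)) ∧
  (∀ X ∈ S, ∀ Y ∈ S, ∃ W ∈ S, X ∩ Y ⊆ W ∧ p (X ∩ Y) = p W) ∧
  (∀ X ∈ S, ∀ Y ∈ S, ∃ Z ∈ S, X ∩ Yᶜ ⊆ Z ∧ p (X ∩ Yᶜ) = p Z) ∧
  (∀ X ∈ S, ∀ (m : ℕ) (T : Fin m → Set Ω), (∀ n, T n ∈ S) →
      X ⊆ ⋃ n, T n → p X ≤ ∑ n, p (T n))

/-- The *exterior quasi-measure* associated with `p` and the coat `S`. -/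
noncomputable def outerQM {Ω : Type*} (S : Set (Set Ω)) (p : Set Ω → ℝ) (A : Set Ω) : ℝ :=
  sInf {r | ∃ (m : ℕ) (T : Fin m → Set Ω),
    (∀ n, T n ∈ S) ∧ A ⊆ (⋃ n, T n) ∧ r = ∑ n, p (T n)}

/-- The algebra of subsets of `Ω` generated by `S`: the smallest family containing `S`,
`∅` and `univ`, closed under complements and finite unions. -/
def genAlgebra {Ω : Type*} (S : Set (Set Ω)) : Set (Set Ω) :=
  ⋂₀ {A | S ⊆ A ∧ ∅ ∈ A ∧ Set.univ ∈ A ∧ (∀ W ∈ A, Wᶜ ∈ A) ∧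
      ∀ W ∈ A, ∀ Z ∈ A, W ∪ Z ∈ A}

section Aux
variable {Ω : Type*} {S : Set (Set Ω)} {p : Set Ω → ℝ}

/-- The set of cover-sums over which the infimum is taken. -/
def outerSet (S : Set (Set Ω)) (p : Set Ω → ℝ) (A : Set Ω) : Set ℝ :=
  {r | ∃ (m : ℕ) (T : Fin m → Set Ω),
    (∀ n, T n ∈ S) ∧ A ⊆ (⋃ n, T n) ∧ r = ∑ n, p (T n)}

lemma outerQM_eq (S : Set (Set Ω)) (p : Set Ω → ℝ) (A : Set Ω) :
    outerQM S p A = sInf (outerSet S p A) := rfl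

lemma p_nonneg (hp : IsQuasiMeasure S p) {X : Set Ω} (hX : X ∈ S) : 0 ≤ p X :=
  (hp.1 X ⟨X, hX, X, hX, Or.inl (Set.inter_self X).symm⟩).1

lemma outerSet_nonempty (hS : IsCoat S) (hp : IsQuasiMeasure S p) (A : Set Ω) :
    (outerSet S p A).Nonempty :=
  ⟨1, 1, fun _ => Set.univ, fun _ => hS.2, by simp [Set.subset_def], by simp [hp.2.2.1]⟩

lemma outerSet_bddBelow (hp : IsQuasiMeasure S p) (A : Set Ω) :
    BddBelow (outerSet S p A) := by
  refine ⟨0, ?_⟩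
  rintro r ⟨m, T, hT, -, rfl⟩
  exact Finset.sum_nonneg fun n _ => p_nonneg hp (hT n)

lemma outerQM_le (hp : IsQuasiMeasure S p) {A : Set Ω} {m : ℕ} {T : Fin m → Set Ω}
    (hT : ∀ n, T n ∈ S) (hcov : A ⊆ ⋃ n, T n) :
    outerQM S p A ≤ ∑ n, p (T n) :=
  csInf_le (outerSet_bddBelow hp A) ⟨m, T, hT, hcov, rfl⟩

lemma outerQM_mono (hS : IsCoat S) (hp : IsQuasiMeasure S p) {A B : Set Ω} (hAB : A ⊆ B) :
    outerQM S p A ≤ outerQM S p B := by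
  refine csInf_le_csInf (outerSet_bddBelow hp A) (outerSet_nonempty hS hp B) ?_
  rintro r ⟨m, T, hT, hcov, rfl⟩
  exact ⟨m, T, hT, hAB.trans hcov, rfl⟩

lemma outerQM_union_le (hS : IsCoat S) (hp : IsQuasiMeasure S p) (A B : Set Ω) :
    outerQM S p (A ∪ B) ≤ outerQM S p A + outerQM S p B := by
  have key : ∀ a ∈ outerSet S p A, ∀ b ∈ outerSet S p B, outerQM S p (A ∪ B) ≤ a + b := by
    rintro a ⟨m, T, hT, hcovT, rfl⟩ b ⟨k, U, hU, hcovU, rfl⟩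
    have hmem : ∀ i : Fin (m + k), (Fin.addCases T U : Fin (m+k) → Set Ω) i ∈ S := by
      intro i
      induction i using Fin.addCases with
      | left i => simpa using hT i
      | right i => simpa using hU i
    have hcov : A ∪ B ⊆ ⋃ i, (Fin.addCases T U : Fin (m+k) → Set Ω) i := by
      rintro x (hx | hx)
      · obtain ⟨_, ⟨n, rfl⟩, hn⟩ := hcovT hx
        exact Set.mem_iUnion.2 ⟨Fin.castAdd k n, by simpa using hn⟩
      · obtain ⟨_, ⟨n, rfl⟩, hn⟩ := hcovU hx
        exact Set.mem_iUnion.2 ⟨Fin.natAdd m n, by simpa using hn⟩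
    have h := outerQM_le hp hmem hcov
    rw [Fin.sum_univ_add] at h
    simpa using h
  have h1 : ∀ a ∈ outerSet S p A,
      outerQM S p (A ∪ B) - a ≤ sInf (outerSet S p B) := by
    intro a ha
    refine le_csInf (outerSet_nonempty hS hp B) fun b hb => ?_
    linarith [key a ha b hb]
  have h2 : outerQM S p (A ∪ B) - sInf (outerSet S p B) ≤ sInf (outerSet S p A) := by
    refine le_csInf (outerSet_nonempty hS hp A) fun a ha => ?_
    linarith [h1 a ha]
  rw [outerQM_eq S p A, outerQM_eq S p B]
  linarith

lemma carath_mem (hS : IsCoat S) (hp : IsQuasiMeasure S p) {E : Set Ω} (hE : E ∈ S) :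
    ∀ A : Set Ω, outerQM S p A = outerQM S p (A ∩ E) + outerQM S p (A ∩ Eᶜ) := by
  intro A
  refine le_antisymm ?_ ?_
  · calc outerQM S p A = outerQM S p ((A ∩ E) ∪ (A ∩ Eᶜ)) := by
          rw [Set.inter_union_compl]
      _ ≤ _ := outerQM_union_le hS hp _ _
  · rw [outerQM_eq S p A]
    refine le_csInf (outerSet_nonempty hS hp A) ?_
    rintro r ⟨m, T, hT, hcov, rfl⟩
    choose W hWS hWsub hWp using fun n => hp.2.2.2.2.1 (T n) (hT n) E hE
    choose Z hZS hZsub hZp using fun n => hp.2.2.2.2.2.1 (T n) (hT n) E hE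
    have covE : A ∩ E ⊆ ⋃ n, W n := by
      rintro x ⟨hxA, hxE⟩
      obtain ⟨_, ⟨n, rfl⟩, hn⟩ := hcov hxA
      exact Set.mem_iUnion.2 ⟨n, hWsub n ⟨hn, hxE⟩⟩
    have covEc : A ∩ Eᶜ ⊆ ⋃ n, Z n := by
      rintro x ⟨hxA, hxE⟩
      obtain ⟨_, ⟨n, rfl⟩, hn⟩ := hcov hxA
      exact Set.mem_iUnion.2 ⟨n, hZsub n ⟨hn, hxE⟩⟩
    have h1 : outerQM S p (A ∩ E) ≤ ∑ n, p (T n ∩ E) := by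
      calc outerQM S p (A ∩ E) ≤ ∑ n, p (W n) := outerQM_le hp hWS covE
        _ = ∑ n, p (T n ∩ E) := Finset.sum_congr rfl fun n _ => (hWp n).symm
    have h2 : outerQM S p (A ∩ Eᶜ) ≤ ∑ n, p (T n ∩ Eᶜ) := by
      calc outerQM S p (A ∩ Eᶜ) ≤ ∑ n, p (Z n) := outerQM_le hp hZS covEc
        _ = ∑ n, p (T n ∩ Eᶜ) := Finset.sum_congr rfl fun n _ => (hZp n).symm
    have h3 : ∑ n, p (T n) = ∑ n, p (T n ∩ E) + ∑ n, p (T n ∩ Eᶜ) := by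
      rw [← Finset.sum_add_distrib]
      exact Finset.sum_congr rfl fun n _ => hp.2.2.2.1 (T n) (hT n) E hE
    linarith

lemma carath_compl {E : Set Ω}
    (hE : ∀ A : Set Ω, outerQM S p A = outerQM S p (A ∩ E) + outerQM S p (A ∩ Eᶜ)) :
    ∀ A : Set Ω, outerQM S p A = outerQM S p (A ∩ Eᶜ) + outerQM S p (A ∩ Eᶜᶜ) := by
  intro A
  rw [compl_compl, add_comm]
  exact hE A

lemma carath_union (hS : IsCoat S) (hp : IsQuasiMeasure S p) {E F : Set Ω}
    (hE : ∀ A : Set Ω, outerQM S p A = outerQM S p (A ∩ E) + outerQM S p (A ∩ Eᶜ))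
    (hF : ∀ A : Set Ω, outerQM S p A = outerQM S p (A ∩ F) + outerQM S p (A ∩ Fᶜ)) :
    ∀ A : Set Ω,
      outerQM S p A = outerQM S p (A ∩ (E ∪ F)) + outerQM S p (A ∩ (E ∪ F)ᶜ) := by
  intro A
  have h1 := hE A
  have h2 := hF (A ∩ E)
  have h3 := hF (A ∩ Eᶜ)
  have hsplit : outerQM S p A = outerQM S p (A ∩ E ∩ F) + outerQM S p (A ∩ E ∩ Fᶜ)
      + (outerQM S p (A ∩ Eᶜ ∩ F) + outerQM S p (A ∩ Eᶜ ∩ Fᶜ)) := by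
    rw [h1, h2, h3]
  have heq : A ∩ Eᶜ ∩ Fᶜ = A ∩ (E ∪ F)ᶜ := by
    rw [Set.compl_union, Set.inter_assoc]
  have hub : outerQM S p (A ∩ (E ∪ F)) ≤
      outerQM S p (A ∩ E ∩ F) + outerQM S p (A ∩ E ∩ Fᶜ) + outerQM S p (A ∩ Eᶜ ∩ F) := by
    have hcover : A ∩ (E ∪ F) ⊆ (A ∩ E ∩ F ∪ A ∩ E ∩ Fᶜ) ∪ A ∩ Eᶜ ∩ F := by
      rintro x ⟨hxA, hx⟩
      by_cases hxE : x ∈ E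
      · by_cases hxF : x ∈ F
        · exact Or.inl (Or.inl ⟨⟨hxA, hxE⟩, hxF⟩)
        · exact Or.inl (Or.inr ⟨⟨hxA, hxE⟩, hxF⟩)
      · rcases hx with hx | hx
        · exact absurd hx hxE
        · exact Or.inr ⟨⟨hxA, hxE⟩, hx⟩
    calc outerQM S p (A ∩ (E ∪ F))
        ≤ outerQM S p ((A ∩ E ∩ F ∪ A ∩ E ∩ Fᶜ) ∪ A ∩ Eᶜ ∩ F) :=
          outerQM_mono hS hp hcover
      _ ≤ outerQM S p (A ∩ E ∩ F ∪ A ∩ E ∩ Fᶜ) + outerQM S p (A ∩ Eᶜ ∩ F) :=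
          outerQM_union_le hS hp _ _
      _ ≤ outerQM S p (A ∩ E ∩ F) + outerQM S p (A ∩ E ∩ Fᶜ) + outerQM S p (A ∩ Eᶜ ∩ F) :=
          add_le_add (outerQM_union_le hS hp _ _) le_rfl
  refine le_antisymm ?_ ?_
  · calc outerQM S p A = outerQM S p ((A ∩ (E ∪ F)) ∪ (A ∩ (E ∪ F)ᶜ)) := by
          rw [Set.inter_union_compl]
      _ ≤ _ := outerQM_union_le hS hp _ _
  · rw [hsplit, ← heq] at *
    linarith

end Aux

/-- every set in the algebra generated by `𝔖` is Carathéodory-measurable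
for the exterior quasi-measure. -/
theorem genAlgebra_caratheodoryMeasurable {Ω : Type*} (S : Set (Set Ω)) (p : Set Ω → ℝ)
    (hS : IsCoat S) (hp : IsQuasiMeasure S p) :
    ∀ E ∈ genAlgebra S, ∀ A : Set Ω,
      outerQM S p A = outerQM S p (A ∩ E) + outerQM S p (A ∩ Eᶜ) := by
  intro E hE
  have hfam : {E : Set Ω | ∀ A : Set Ω,
      outerQM S p A = outerQM S p (A ∩ E) + outerQM S p (A ∩ Eᶜ)} ∈
      {A | S ⊆ A ∧ ∅ ∈ A ∧ Set.univ ∈ A ∧ (∀ W ∈ A, Wᶜ ∈ A) ∧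
        ∀ W ∈ A, ∀ Z ∈ A, W ∪ Z ∈ A} := by
    refine ⟨fun X hX => carath_mem hS hp hX, carath_mem hS hp hS.1,
      carath_mem hS hp hS.2, fun W hW => carath_compl hW,
      fun W hW Z hZ => carath_union hS hp hW hZ⟩
  exact hE _ hfam
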